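/- Characterization of S̄_π in the identifiable case: assume the graph is acyclic, let S be a child of C, and assume S_π ∩ S̄_π = ∅. Then S ∈ S̄_π if and only if there is no r ∈ R with Relation.ReflTransGen A S r and Relation.ReflTransGen A r E (that is, no walk from S to E passes through R). -/

import Mathlib

/-- `S ∈ S_π`: `S` is a child of `C` and the arc `(C,S)` occurs in some walk from
`C` to `E` passing through the set `R` of redlining attributes. -/
def memSpi {V : Type*} (A : V → V → Prop) (C E : V) (R : Set V) (S : V) : Prop :=
  A C S ∧ ∃ l : List V, List.Chain A C l ∧
    (C :: l).getLast (List.cons_ne_nil C l) = E ∧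
    [C, S] <:+: (C :: l) ∧ ∃ x ∈ C :: l, x ∈ R

/-- `S ∈ S̄_π`: `S` is a child of `C` such that either there is no walk from `S`
to `E`, or the arc `(C,S)` occurs in some walk from `C` to `E` avoiding `R`. -/
def memSpiBar {V : Type*} (A : V → V → Prop) (C E : V) (R : Set V) (S : V) : Prop :=
  A C S ∧
    ((¬ ∃ l : List V, List.Chain A S l ∧
        (S :: l).getLast (List.cons_ne_nil S l) = E) ∨
      ∃ l : List V, List.Chain A C l ∧
        (C :: l).getLast (List.cons_ne_nil C l) = E ∧
        [C, S] <:+: (C :: l) ∧ ∀ x ∈ C :: l, x ∉ R)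


lemma rtg_iff_chain {V : Type*} (A : V → V → Prop) (a b : V) :
    Relation.ReflTransGen A a b ↔
      ∃ l : List V, List.Chain A a l ∧ (a :: l).getLast (List.cons_ne_nil a l) = b := by
  constructor
  · intro h
    induction h using Relation.ReflTransGen.head_induction_on with
    | refl => exact ⟨[], List.Chain.nil, rfl⟩
    | head hab _ ih =>
      obtain ⟨l, hc, hl⟩ := ih
      exact ⟨_ :: l, List.chain_cons.2 ⟨hab, hc⟩, by
        rwa [List.getLast_cons (List.cons_ne_nil _ _)]⟩
  · rintro ⟨l, hc, hl⟩
    induction l generalizing a with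
    | nil => simp at hl; exact hl ▸ Relation.ReflTransGen.refl
    | cons x l ih =>
      obtain ⟨hax, hc⟩ := List.chain_cons.1 hc
      rw [List.getLast_cons (List.cons_ne_nil _ _)] at hl
      exact Relation.ReflTransGen.head hax (ih x hc hl)

lemma chain_comp {V : Type*} (A : V → V → Prop) {a m b : V}
    (h : Relation.ReflTransGen A a m) :
    ∀ l : List V, List.Chain A m l → (m :: l).getLast (List.cons_ne_nil m l) = b →
      ∃ l' : List V, List.Chain A a l' ∧ (a :: l').getLast (List.cons_ne_nil a l') = b ∧
        m ∈ a :: l' := by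
  induction h using Relation.ReflTransGen.head_induction_on with
  | refl => exact fun l hc hl => ⟨l, hc, hl, List.mem_cons_self⟩
  | head hab _ ih =>
    intro l hc hl
    obtain ⟨l', hc', hl', hm⟩ := ih l hc hl
    exact ⟨_ :: l', List.chain_cons.2 ⟨hab, hc'⟩, by
      rwa [List.getLast_cons (List.cons_ne_nil _ _)], List.mem_cons_of_mem _ hm⟩

lemma chain_mem_rtg {V : Type*} (A : V → V → Prop) {a b : V} :
    ∀ l : List V, List.Chain A a l → (a :: l).getLast (List.cons_ne_nil a l) = b →
      ∀ x ∈ a :: l, Relation.ReflTransGen A a x ∧ Relation.ReflTransGen A x b := by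
  intro l
  induction l generalizing a with
  | nil =>
    intro _ hl x hx
    simp at hl hx
    subst hl; subst hx
    exact ⟨.refl, .refl⟩
  | cons y l ih =>
    intro hc hl x hx
    obtain ⟨hay, hc2⟩ := List.chain_cons.1 hc
    rw [List.getLast_cons (List.cons_ne_nil _ _)] at hl
    rcases List.mem_cons.1 hx with rfl | hx
    · refine ⟨.refl, (rtg_iff_chain A x b).2 ⟨y :: l, hc, ?_⟩⟩
      rwa [List.getLast_cons (List.cons_ne_nil _ _)]
    · obtain ⟨h1, h2⟩ := ih hc2 hl x hx
      exact ⟨Relation.ReflTransGen.head hay h1, h2⟩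
/-- Characterization of `S̄_π` in the identifiable case: in an acyclic graph, if
`S_π ∩ S̄_π = ∅`, then a child `S` of `C` belongs to `S̄_π` iff there is no
`r ∈ R` with `S ⟶* r` and `r ⟶* E`. -/
theorem memSpiBar_iff {V : Type*} [Fintype V] (A : V → V → Prop) (C E : V) (R : Set V)
    (hacyc : ∀ v : V, ¬ Relation.TransGen A v v)
    (hCR : C ∉ R) (hER : E ∉ R)
    (hdisj : {T : V | memSpi A C E R T} ∩ {T : V | memSpiBar A C E R T} = ∅)
    (S : V) (hS : A C S) :
    memSpiBar A C E R S ↔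
      ¬ ∃ r ∈ R, Relation.ReflTransGen A S r ∧ Relation.ReflTransGen A r E := by
  constructor
  · rintro hbar ⟨r, hrR, hSr, hrE⟩
    rcases hbar.2 with hno | hyes
    · exact hno ((rtg_iff_chain A S E).1 (hSr.trans hrE))
    · -- build S ∈ S_π, contradicting disjointness
      obtain ⟨l2, hc2, hl2⟩ := (rtg_iff_chain A r E).1 hrE
      obtain ⟨l, hc, hl, hm⟩ := chain_comp A hSr l2 hc2 hl2
      have hSpi : memSpi A C E R S := by
        refine ⟨hS, S :: l, List.chain_cons.2 ⟨hS, hc⟩, ?_, ⟨[], l, rfl⟩,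
          r, List.mem_cons_of_mem _ hm, hrR⟩
        rwa [List.getLast_cons (List.cons_ne_nil _ _)]
      have : S ∈ ({T : V | memSpi A C E R T} ∩ {T : V | memSpiBar A C E R T}) :=
        ⟨hSpi, hbar⟩
      rw [hdisj] at this
      exact this
  · intro hnr
    refine ⟨hS, ?_⟩
    by_cases h : ∃ l : List V, List.Chain A S l ∧
        (S :: l).getLast (List.cons_ne_nil S l) = E
    · obtain ⟨l, hc, hl⟩ := h
      refine Or.inr ⟨S :: l, List.chain_cons.2 ⟨hS, hc⟩, ?_, ⟨[], l, rfl⟩, ?_⟩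
      · rwa [List.getLast_cons (List.cons_ne_nil _ _)]
      · intro x hx hxR
        rcases List.mem_cons.1 hx with rfl | hx
        · exact hCR hxR
        · obtain ⟨h1, h2⟩ := chain_mem_rtg A l hc hl x hx
          exact hnr ⟨x, hxR, h1, h2⟩
    · exact Or.inl h
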